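/- (Sharpness of Proposition 1) Under the assumptions that σ can take any value in [σ̲, σ̄], π any value in [π̲, π̄] (with σ̄ + π̲ - 1 > 0, σ̲ + π̄ - 1 > 0, γ + π̲ - 1 ≥ 0, γ ≤ σ̲, and (γ+π̄-1)/(σ̲+π̄-1) ≤ 1), and r any value in [0,1], every ρ in the interval [τ·(γ+π̲-1)/(σ̄+π̲-1), τ·(γ+π̄-1)/(σ̲+π̄-1) + (1-τ)] is attained by some feasible choice of (σ, π, r) with ρ = τ·(γ+π-1)/(σ+π-1) + (1-τ)·r. -/

import Mathlib

open Set

lemma attain_aux (γ σl σu πl πu : ℝ)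
    (hσi : σl ≤ σu) (hπi : πl ≤ πu)
    (h1 : σu + πl - 1 > 0) (h2 : σl + πu - 1 > 0)
    (h3 : γ + πl - 1 ≥ 0) (h4 : γ ≤ σl) :
    ∀ t ∈ Set.Icc ((γ + πl - 1) / (σu + πl - 1)) ((γ + πu - 1) / (σl + πu - 1)),
      ∃ σ π : ℝ, σ ∈ Set.Icc σl σu ∧ π ∈ Set.Icc πl πu ∧
        (γ + π - 1) / (σ + π - 1) = t := by
  intro t ht
  have hMpos : σu + πu - 1 > 0 := by linarith
  set qM : ℝ := (γ + πu - 1) / (σu + πu - 1) with hqM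
  by_cases hc : t ≤ qM
  · -- vary π with σ = σu
    have hcont : ContinuousOn (fun π => (γ + π - 1) / (σu + π - 1)) (Icc πl πu) := by
      apply ContinuousOn.div (by fun_prop) (by fun_prop)
      intro x hx
      have := hx.1
      intro h; rw [sub_eq_zero] at h; linarith [hx.1]
    have h := intermediate_value_Icc hπi hcont
    have htm : t ∈ Icc ((γ + πl - 1) / (σu + πl - 1)) ((γ + πu - 1) / (σu + πu - 1)) :=
      ⟨ht.1, hc⟩
    obtain ⟨π, hπ, hfπ⟩ := h htm
    exact ⟨σu, π, ⟨hσi, le_refl _⟩, hπ, hfπ⟩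
  · -- vary σ with π = πu
    push_neg at hc
    have hcont : ContinuousOn (fun σ => (γ + πu - 1) / (σ + πu - 1)) (Icc σl σu) := by
      apply ContinuousOn.div (by fun_prop) (by fun_prop)
      intro x hx
      intro h; rw [sub_eq_zero] at h; linarith [hx.1]
    have h := intermediate_value_Icc' hσi hcont
    have htm : t ∈ Icc ((γ + πu - 1) / (σu + πu - 1)) ((γ + πu - 1) / (σl + πu - 1)) :=
      ⟨hc.le, ht.2⟩
    obtain ⟨σ, hσ, hfσ⟩ := h htm
    exact ⟨σ, πu, hσ, ⟨hπi, le_refl _⟩, hfσ⟩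

theorem stmt_6 (γ τ σl σu πl πu : ℝ)
    (hσi : σl ≤ σu) (hπi : πl ≤ πu)
    (h1 : σu + πl - 1 > 0) (h2 : σl + πu - 1 > 0)
    (h3 : γ + πl - 1 ≥ 0) (h4 : γ ≤ σl)
    (h5 : (γ + πu - 1) / (σl + πu - 1) ≤ 1)
    (hτ : τ ∈ Set.Icc (0:ℝ) 1) :
    ∀ ρ ∈ Set.Icc (τ * ((γ + πl - 1) / (σu + πl - 1)))
        (τ * ((γ + πu - 1) / (σl + πu - 1)) + (1 - τ)),
      ∃ σ π r : ℝ, σ ∈ Set.Icc σl σu ∧ π ∈ Set.Icc πl πu ∧ r ∈ Set.Icc (0:ℝ) 1 ∧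
        (γ + π - 1) / (σ + π - 1) ∈ Set.Icc (0:ℝ) 1 ∧
        ρ = τ * ((γ + π - 1) / (σ + π - 1)) + (1 - τ) * r := by
  intro ρ hρ
  set qL : ℝ := (γ + πl - 1) / (σu + πl - 1) with hqLdef
  set qU : ℝ := (γ + πu - 1) / (σl + πu - 1) with hqUdef
  have hqL0 : 0 ≤ qL := div_nonneg h3 h1.le
  have hqU0 : 0 ≤ qU := div_nonneg (by linarith) h2.le
  have hLU : qL ≤ qU := by
    rw [hqLdef, hqUdef, div_le_div_iff₀ h1 h2]
    nlinarith
  by_cases hρu : ρ ≤ τ * qU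
  · by_cases hτ0 : τ = 0
    · have hρ0 : ρ = 0 := by
        have := hρ.1; rw [hτ0] at hρu this; simp at hρu this; linarith
      refine ⟨σu, πl, 0, ⟨hσi, le_refl _⟩, ⟨le_refl _, hπi⟩, ⟨le_refl _, zero_le_one⟩,
        ⟨hqL0, le_trans hLU h5⟩, ?_⟩
      rw [hρ0, hτ0]; ring
    · have hτpos : 0 < τ := lt_of_le_of_ne hτ.1 (Ne.symm hτ0)
      have htmem : ρ / τ ∈ Icc qL qU := by
        constructor
        · rw [le_div_iff₀ hτpos]; linarith [hρ.1]
        · rw [div_le_iff₀ hτpos]; linarith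
      obtain ⟨σ, π, hσ, hπ, heq⟩ := attain_aux γ σl σu πl πu hσi hπi h1 h2 h3 h4 (ρ/τ) htmem
      refine ⟨σ, π, 0, hσ, hπ, ⟨le_refl _, zero_le_one⟩,
        ⟨by rw [heq]; exact le_trans hqL0 htmem.1, by rw [heq]; exact le_trans htmem.2 (le_trans (le_refl _) h5)⟩, ?_⟩
      rw [heq]; field_simp; ring
  · push_neg at hρu
    have hτ1 : τ < 1 := by
      by_contra h
      push_neg at h
      have : τ = 1 := le_antisymm hτ.2 h
      rw [this] at hρu
      have := hρ.2
      rw [‹τ = 1›] at this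
      simp at this hρu
      linarith
    have h1τ : (0:ℝ) < 1 - τ := by linarith
    refine ⟨σl, πu, (ρ - τ * qU) / (1 - τ), ⟨le_refl _, hσi⟩, ⟨hπi, le_refl _⟩,
      ⟨div_nonneg (by linarith) h1τ.le, by rw [div_le_one h1τ]; linarith [hρ.2]⟩,
      ⟨hqU0, h5⟩, ?_⟩
    have hcancel : (1 - τ) * ((ρ - τ * qU) / (1 - τ)) = ρ - τ * qU := by
      field_simp
    rw [← hqUdef, hcancel]; ring
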